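/- In a {K₃, false-twin}-free graph G, every vertex v is contained in some biclique that is a star, i.e., a biclique whose induced subgraph is isomorphic to K_{1,r} for some r ≥ 1. -/

import Mathlib

/-- A set of vertices inducing a complete bipartite subgraph (both sides nonempty). -/
def IsCompleteBipartiteSet {V : Type*} (G : SimpleGraph V) (B : Set V) : Prop :=
  ∃ X Y : Set V, X.Nonempty ∧ Y.Nonempty ∧ Disjoint X Y ∧ B = X ∪ Y ∧
    (∀ x ∈ X, ∀ y ∈ Y, G.Adj x y) ∧
    (∀ x ∈ X, ∀ x' ∈ X, ¬ G.Adj x x') ∧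
    (∀ y ∈ Y, ∀ y' ∈ Y, ¬ G.Adj y y')

/-- A biclique: a maximal set of vertices inducing a complete bipartite subgraph. -/
def IsBiclique {V : Type*} (G : SimpleGraph V) (B : Set V) : Prop :=
  IsCompleteBipartiteSet G B ∧
    ∀ B' : Set V, IsCompleteBipartiteSet G B' → B ⊆ B' → B' = B

/-- A vertex set that is a star: a center `c` adjacent to all other vertices of the set,
which are nonempty and pairwise non-adjacent (shape `K_{1,r}`, `r ≥ 1`). -/
def IsStarSet {V : Type*} (G : SimpleGraph V) (B : Set V) : Prop :=
  ∃ c ∈ B, (B \ {c}).Nonempty ∧ (∀ w ∈ B, w ≠ c → G.Adj c w) ∧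
    (∀ w ∈ B, ∀ z ∈ B, w ≠ c → z ≠ c → ¬ G.Adj w z)

/-- A graph is false-twin-free if no two distinct vertices have equal open neighborhoods. -/
def FalseTwinFree {V : Type*} (G : SimpleGraph V) : Prop :=
  ∀ u v : V, G.neighborSet u = G.neighborSet v → u = v

/-- In a connected {K₃, false-twin}-free graph, every vertex is contained in some
star biclique. -/
theorem mem_star_biclique {V : Type*} [Fintype V] (G : SimpleGraph V)
    (hconn : G.Connected) (hn : 2 ≤ Fintype.card V)
    (hK3 : G.CliqueFree 3) (htf : FalseTwinFree G) :
    ∀ v : V, ∃ B : Set V, v ∈ B ∧ IsBiclique G B ∧ IsStarSet G B := by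
  classical
  intro v
  have htri : ∀ a b c : V, G.Adj a b → G.Adj a c → G.Adj b c → False := by
    intro a b c hab hac hbc
    exact hK3 {a, b, c} (SimpleGraph.is3Clique_triple_iff.mpr ⟨hab, hac, hbc⟩)
  -- v has a neighbor u
  obtain ⟨w, hw⟩ := Fintype.exists_ne_of_one_lt_card (by omega) v
  obtain ⟨p⟩ := hconn.preconnected v w
  have hadj : ∃ u, G.Adj v u := by
    cases p with
    | nil => exact absurd rfl hw
    | cons h q => exact ⟨_, h⟩
  obtain ⟨u, hu⟩ := hadj
  -- choose c with N(u) ⊆ N(c) maximizing the degree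
  set s : Finset V := Finset.univ.filter
    (fun c => G.neighborFinset u ⊆ G.neighborFinset c) with hs
  have hus : u ∈ s := by simp [hs]
  obtain ⟨c, hcs, hcmax⟩ :=
    s.exists_max_image (fun c => (G.neighborFinset c).card) ⟨u, hus⟩
  have hcsub : G.neighborFinset u ⊆ G.neighborFinset c := by
    simpa [hs] using hcs
  have hvc : v ∈ G.neighborSet c := by
    have : v ∈ G.neighborFinset c :=
      hcsub (by simpa [SimpleGraph.mem_neighborFinset] using hu.symm)
    simpa [SimpleGraph.mem_neighborFinset] using this
  have hmaxc : ∀ x : V, G.neighborSet c ⊆ G.neighborSet x → x = c := by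
    intro x hx
    have hx' : G.neighborFinset c ⊆ G.neighborFinset x := by
      intro y hy
      have : y ∈ G.neighborSet x := hx (by simpa [SimpleGraph.mem_neighborFinset] using hy)
      simpa [SimpleGraph.mem_neighborFinset] using this
    have hxs : x ∈ s := by
      simp only [hs, Finset.mem_filter, Finset.mem_univ, true_and]
      exact hcsub.trans hx'
    have hcard : (G.neighborFinset x).card ≤ (G.neighborFinset c).card := hcmax x hxs
    have heq : G.neighborFinset c = G.neighborFinset x :=
      Finset.eq_of_subset_of_card_le hx' hcard
    refine htf x c ?_
    ext y
    constructor
    · intro hy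
      have : y ∈ G.neighborFinset x := by simpa [SimpleGraph.mem_neighborFinset] using hy
      rw [← heq] at this
      simpa [SimpleGraph.mem_neighborFinset] using this
    · intro hy
      have : y ∈ G.neighborFinset c := by simpa [SimpleGraph.mem_neighborFinset] using hy
      rw [heq] at this
      simpa [SimpleGraph.mem_neighborFinset] using this
  have hcc : c ∉ G.neighborSet c := by
    simp [SimpleGraph.mem_neighborSet]
  set B : Set V := {c} ∪ G.neighborSet c with hB
  have hmemB : ∀ w ∈ B, w ≠ c → w ∈ G.neighborSet c := by
    intro w hwB hwc
    rcases hwB with h | h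
    · exact absurd h hwc
    · exact h
  -- key maximality lemma
  have key : ∀ X Y : Set V, (∀ x ∈ X, ∀ y ∈ Y, G.Adj x y) →
      (∀ x ∈ X, ∀ x' ∈ X, ¬ G.Adj x x') → B ⊆ X ∪ Y → c ∈ X → X ∪ Y = B := by
    intro X Y hXY hX hsub hcX
    have hYN : Y ⊆ G.neighborSet c := fun y hy => hXY c hcX y hy
    have hNY : G.neighborSet c ⊆ Y := by
      intro z hz
      rcases hsub (Or.inr hz) with hzX | hzY
      · exact absurd hz (hX c hcX z hzX)
      · exact hzY
    have hXc : X ⊆ {c} := by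
      intro x hx
      have : G.neighborSet c ⊆ G.neighborSet x := fun z hz => hXY x hx z (hNY hz)
      exact hmaxc x this
    apply Set.eq_of_subset_of_subset
    · intro a ha
      rcases ha with haX | haY
      · exact Or.inl (hXc haX)
      · exact Or.inr (hYN haY)
    · intro a ha
      rcases ha with haC | haN
      · exact Or.inl (haC ▸ hcX)
      · exact Or.inr (hNY haN)
  refine ⟨B, Or.inr hvc, ⟨⟨{c}, G.neighborSet c, ⟨c, rfl⟩, ⟨v, hvc⟩, ?_, rfl, ?_, ?_, ?_⟩, ?_⟩, ?_⟩
  · rw [Set.disjoint_left]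
    intro a ha
    rw [Set.mem_singleton_iff] at ha
    subst ha
    exact hcc
  · intro x hx y hy
    rw [Set.mem_singleton_iff] at hx
    rw [hx]
    exact hy
  · intro x hx x' hx'
    rw [Set.mem_singleton_iff] at hx hx'
    rw [hx, hx']
    exact G.loopless.irrefl c
  · intro y hy y' hy'
    intro hyy'
    exact htri c y y' hy hy' hyy'
  · -- maximality
    rintro B' ⟨X, Y, hXne, hYne, hdisj, hBeq, hXY, hX, hY⟩ hsub
    subst hBeq
    have hcB' : c ∈ X ∪ Y := hsub (Or.inl rfl)
    rcases hcB' with hcX | hcY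
    · exact key X Y hXY hX hsub hcX
    · have := key Y X (fun y hy x hx => (hXY x hx y hy).symm) hY
        (by rw [Set.union_comm]; exact hsub) hcY
      rw [Set.union_comm]
      exact this
  · -- star
    refine ⟨c, Or.inl rfl, ⟨v, Or.inr hvc, ?_⟩, ?_, ?_⟩
    · intro h
      rw [Set.mem_singleton_iff] at h
      subst h
      exact hcc hvc
    · intro w hwB hwc
      exact hmemB w hwB hwc
    · intro w hwB z hzB hwc hzc hwz
      exact htri c w z (hmemB w hwB hwc) (hmemB z hzB hzc) hwz
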